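/- Discrete embedding ℓ¹ ↪ H^{-1} in dimension one: there exists a universal constant C such that for all M ≥ 1 and all u ∈ ℝ^{T_M}, ‖u‖_{-1,M} ≤ C·‖u‖_{1,M}, where ‖u‖_{1,M} = (1/M)∑_{j=1}^M |u_j|. -/

import Mathlib

/-- The periodic discrete Laplacian `(Δ_M u)_j = M² (u_{j+1} + u_{j-1} - 2 u_j)`. -/
noncomputable def lapM (M : ℕ) [NeZero M] (u : ZMod M → ℝ) : ZMod M → ℝ :=
  fun j => (M : ℝ) ^ 2 * (u (j + 1) + u (j - 1) - 2 * u j)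

/-- The uniformly weighted inner product `⟨u, v⟩_{2,M} = (1/M) ∑_j u_j v_j`. -/
noncomputable def innerM (M : ℕ) [NeZero M] (u v : ZMod M → ℝ) : ℝ :=
  (1 / (M : ℝ)) * ∑ j : ZMod M, u j * v j

/-- The mean `[u]_M = (1/M) ∑_j u_j`. -/
noncomputable def meanM (M : ℕ) [NeZero M] (u : ZMod M → ℝ) : ℝ :=
  (1 / (M : ℝ)) * ∑ j : ZMod M, u j

/-- The discrete `ℓ¹` norm `‖u‖_{1,M} = (1/M) ∑_j |u_j|`. -/
noncomputable def normOneM (M : ℕ) [NeZero M] (u : ZMod M → ℝ) : ℝ :=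
  (1 / (M : ℝ)) * ∑ j : ZMod M, |u j|

/-- Discrete embedding `ℓ¹ ↪ H^{-1}` in dimension one: there is a universal `C`
such that `‖u‖_{-1,M} ≤ C ‖u‖_{1,M}` for all `M ≥ 1` and all `u`.  The negative
norm `‖u‖_{-1,M}² = [u]_M² + ⟨ũ, (-Δ_M)⁻¹ ũ⟩_{2,M}` is encoded through the
mean-free solution `w` of `-Δ_M w = ũ`, `ũ = u - [u]_M`. -/
theorem stmt9 : ∃ C : ℝ, 0 < C ∧
    ∀ (M : ℕ) [NeZero M], ∀ u w : ZMod M → ℝ,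
      (∑ j : ZMod M, w j = 0) →
      (∀ j, -(lapM M w j) = u j - meanM M u) →
      Real.sqrt ((meanM M u) ^ 2 + innerM M (fun j => u j - meanM M u) w)
        ≤ C * normOneM M u := by
  refine ⟨3, by norm_num, ?_⟩
  intro M _ u w hsum hw
  have hM0 : (0 : ℝ) < (M : ℝ) := by
    exact_mod_cast Nat.pos_of_ne_zero (NeZero.ne M)
  set m := meanM M u with hm_def
  set N := normOneM M u with hN_def
  set Su := ∑ j : ZMod M, |u j| with hSu_def
  set Q := ∑ j : ZMod M, (w (j + 1) - w j) ^ 2 with hQ_def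
  set D := ∑ j : ZMod M, |w (j + 1) - w j| with hD_def
  have hQ0 : 0 ≤ Q := Finset.sum_nonneg fun j _ => sq_nonneg _
  have hD0 : 0 ≤ D := Finset.sum_nonneg fun j _ => abs_nonneg _
  have hSu0 : 0 ≤ Su := Finset.sum_nonneg fun j _ => abs_nonneg _
  have hN0 : 0 ≤ N := by
    rw [hN_def, normOneM]; positivity
  -- shift invariance of sums over ZMod M
  have shift : ∀ f : ZMod M → ℝ, ∑ j : ZMod M, f (j + 1) = ∑ j : ZMod M, f j :=
    fun f => Fintype.sum_equiv (Equiv.addRight 1) _ _ (fun j => rfl)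
  -- summation by parts: ∑ ũ w = M² Q
  have key : ∑ j : ZMod M, (u j - m) * w j = (M : ℝ) ^ 2 * Q := by
    have h1 : ∀ j : ZMod M, (u j - m) * w j
        = (M : ℝ) ^ 2 * (2 * w j ^ 2 - w (j + 1) * w j - w (j - 1) * w j) := by
      intro j
      rw [← hw j]
      simp only [lapM]
      ring
    rw [Finset.sum_congr rfl fun j _ => h1 j, ← Finset.mul_sum]
    have e1 : ∑ j : ZMod M, w (j + 1) ^ 2 = ∑ j : ZMod M, w j ^ 2 :=
      shift (fun j => w j ^ 2)
    have e2 : ∑ j : ZMod M, w j * w (j + 1) = ∑ j : ZMod M, w (j - 1) * w j := by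
      have := shift (fun j => w (j - 1) * w j)
      simpa using this
    have eL : ∑ j : ZMod M, (2 * w j ^ 2 - w (j + 1) * w j - w (j - 1) * w j)
        = 2 * (∑ j : ZMod M, w j ^ 2) - (∑ j : ZMod M, w (j + 1) * w j)
          - (∑ j : ZMod M, w (j - 1) * w j) := by
      simp [Finset.sum_sub_distrib, Finset.mul_sum]
    have eR : Q = (∑ j : ZMod M, w (j + 1) ^ 2)
        - 2 * (∑ j : ZMod M, w (j + 1) * w j) + ∑ j : ZMod M, w j ^ 2 := by
      rw [hQ_def]
      rw [show (∑ j : ZMod M, (w (j + 1) - w j) ^ 2)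
          = ∑ j : ZMod M, (w (j + 1) ^ 2 - 2 * (w (j + 1) * w j) + w j ^ 2) from
        Finset.sum_congr rfl fun j _ => by ring]
      simp [Finset.sum_add_distrib, Finset.sum_sub_distrib, Finset.mul_sum]
    have e2' : ∑ j : ZMod M, w (j + 1) * w j = ∑ j : ZMod M, w (j - 1) * w j := by
      rw [← e2]; exact Finset.sum_congr rfl fun j _ => mul_comm _ _
    rw [eL, eR, e1, ← e2']
    ring
  -- telescoping and sup bound on w
  have tel : ∀ (j : ZMod M) (n : ℕ),
      w (j + (n : ZMod M)) - w j = ∑ i ∈ Finset.range n, (w (j + (i : ZMod M) + 1) - w (j + (i : ZMod M))) := by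
    intro j n
    induction n with
    | zero => simp
    | succ n ih =>
      rw [Finset.sum_range_succ, ← ih]
      push_cast
      ring_nf
  have hosc : ∀ j k : ZMod M, |w k - w j| ≤ D := by
    intro j k
    have hk : j + (((k - j).val : ℕ) : ZMod M) = k := by
      rw [ZMod.natCast_val, ZMod.cast_id]
      ring
    have := tel j (k - j).val
    rw [hk] at this
    rw [this]
    calc |∑ i ∈ Finset.range (k - j).val, (w (j + (i : ZMod M) + 1) - w (j + (i : ZMod M)))|
        ≤ ∑ i ∈ Finset.range (k - j).val, |w (j + (i : ZMod M) + 1) - w (j + (i : ZMod M))| :=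
          Finset.abs_sum_le_sum_abs _ _
      _ ≤ D := by
          rw [hD_def]
          have hinj : ∀ a ∈ Finset.range (k - j).val, ∀ b ∈ Finset.range (k - j).val,
              j + (a : ZMod M) = j + (b : ZMod M) → a = b := by
            intro a ha b hb hab
            have ha' : a < M := lt_of_lt_of_le (Finset.mem_range.mp ha) (ZMod.val_lt _).le
            have hb' : b < M := lt_of_lt_of_le (Finset.mem_range.mp hb) (ZMod.val_lt _).le
            have : (a : ZMod M) = (b : ZMod M) := by
              have := add_left_cancel hab
              exact this
            have := congrArg ZMod.val this
            rwa [ZMod.val_natCast_of_lt ha', ZMod.val_natCast_of_lt hb'] at this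
          calc ∑ i ∈ Finset.range (k - j).val, |w (j + (i : ZMod M) + 1) - w (j + (i : ZMod M))|
              = ∑ x ∈ (Finset.range (k - j).val).image (fun i : ℕ => j + (i : ZMod M)),
                  |w (x + 1) - w x| := (Finset.sum_image (f := fun x : ZMod M => |w (x + 1) - w x|) hinj).symm
            _ ≤ ∑ x : ZMod M, |w (x + 1) - w x| :=
                Finset.sum_le_sum_of_subset_of_nonneg (Finset.subset_univ _)
                  (fun _ _ _ => abs_nonneg _)
  have hwbound : ∀ k : ZMod M, |w k| ≤ D := by
    intro k
    have h1 : (M : ℝ) * w k = ∑ j : ZMod M, (w k - w j) := by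
      rw [Finset.sum_sub_distrib, hsum, Finset.sum_const, Finset.card_univ,
        ZMod.card, nsmul_eq_mul]
      ring
    have h2 : |(M : ℝ) * w k| ≤ (M : ℝ) * D := by
      rw [h1]
      calc |∑ j : ZMod M, (w k - w j)| ≤ ∑ j : ZMod M, |w k - w j| :=
            Finset.abs_sum_le_sum_abs _ _
        _ ≤ ∑ _j : ZMod M, D := Finset.sum_le_sum fun j _ => hosc j k
        _ = (M : ℝ) * D := by
            rw [Finset.sum_const, Finset.card_univ, ZMod.card, nsmul_eq_mul]
    rw [abs_mul, abs_of_pos hM0] at h2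
    exact le_of_mul_le_mul_left h2 hM0
  -- Cauchy-Schwarz: D² ≤ M Q
  have hCS : D ^ 2 ≤ (M : ℝ) * Q := by
    have := Finset.sum_mul_sq_le_sq_mul_sq Finset.univ (fun _ : ZMod M => (1 : ℝ))
      (fun j => |w (j + 1) - w j|)
    simpa [hD_def, hQ_def, Finset.card_univ, ZMod.card, sq_abs] using this
  -- upper bound: M² Q ≤ 2 Su D
  have hUtil : ∑ j : ZMod M, |u j - m| ≤ 2 * Su := by
    have hmb : (M : ℝ) * |m| ≤ Su := by
      rw [hm_def, meanM, abs_mul, abs_of_pos (by positivity : (0:ℝ) < 1 / (M:ℝ))]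
      rw [show (M : ℝ) * (1 / (M : ℝ) * |∑ j : ZMod M, u j|) = |∑ j : ZMod M, u j| by
        field_simp]
      exact Finset.abs_sum_le_sum_abs _ _
    calc ∑ j : ZMod M, |u j - m| ≤ ∑ j : ZMod M, (|u j| + |m|) :=
          Finset.sum_le_sum fun j _ => abs_sub _ _
      _ = Su + (M : ℝ) * |m| := by
          rw [Finset.sum_add_distrib, Finset.sum_const, Finset.card_univ, ZMod.card,
            nsmul_eq_mul, hSu_def]
      _ ≤ 2 * Su := by linarith
  have hUp : (M : ℝ) ^ 2 * Q ≤ 2 * Su * D := by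
    rw [← key]
    calc ∑ j : ZMod M, (u j - m) * w j ≤ ∑ j : ZMod M, |u j - m| * D := by
          refine Finset.sum_le_sum fun j _ => ?_
          calc (u j - m) * w j ≤ |(u j - m) * w j| := le_abs_self _
            _ = |u j - m| * |w j| := abs_mul _ _
            _ ≤ |u j - m| * D := by
                exact mul_le_mul_of_nonneg_left (hwbound j) (abs_nonneg _)
      _ = (∑ j : ZMod M, |u j - m|) * D := by rw [Finset.sum_mul]
      _ ≤ 2 * Su * D := mul_le_mul_of_nonneg_right hUtil hD0
  -- conclude M Q ≤ 4 N²
  have hNval : (M : ℝ) * N = Su := by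
    rw [hN_def, normOneM, ← hSu_def]
    field_simp
  have hMQ : (M : ℝ) * Q ≤ 4 * N ^ 2 := by
    rcases eq_or_lt_of_le hQ0 with hQz | hQp
    · rw [← hQz]
      simp
      positivity
    · -- (M²Q)² ≤ (2 Su D)² ≤ 4 Su² · M Q
      have h1 : ((M : ℝ) ^ 2 * Q) ^ 2 ≤ (2 * Su * D) ^ 2 := by
        have h2 : 0 ≤ (M : ℝ) ^ 2 * Q := by positivity
        exact pow_le_pow_left₀ h2 hUp 2
      have h3 : (2 * Su * D) ^ 2 ≤ 4 * Su ^ 2 * ((M : ℝ) * Q) := by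
        have : (2 * Su * D) ^ 2 = 4 * Su ^ 2 * D ^ 2 := by ring
        rw [this]
        exact mul_le_mul_of_nonneg_left hCS (by positivity)
      have h4 : ((M : ℝ) ^ 2 * Q) ^ 2 ≤ 4 * Su ^ 2 * ((M : ℝ) * Q) := h1.trans h3
      -- divide by M Q > 0
      have hMQpos : 0 < (M : ℝ) * Q := by positivity
      have h5 : (M : ℝ) ^ 3 * Q ≤ 4 * Su ^ 2 := by
        have := (mul_le_mul_iff_left₀ hMQpos).mp (by nlinarith : ((M:ℝ)^3 * Q) * ((M:ℝ) * Q) ≤ (4 * Su ^ 2) * ((M:ℝ) * Q))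
        exact this
      -- now M Q ≤ 4 Su²/M² = 4 N²
      have h6 : (M : ℝ) ^ 2 * ((M : ℝ) * Q) ≤ (M : ℝ) ^ 2 * (4 * N ^ 2) := by
        calc (M : ℝ) ^ 2 * ((M : ℝ) * Q) = (M : ℝ) ^ 3 * Q := by ring
          _ ≤ 4 * Su ^ 2 := h5
          _ = 4 * ((M : ℝ) * N) ^ 2 := by rw [hNval]
          _ = (M : ℝ) ^ 2 * (4 * N ^ 2) := by ring
      exact le_of_mul_le_mul_left h6 (by positivity)
  -- the inner product equals M Q
  have hS : innerM M (fun j => u j - m) w = (M : ℝ) * Q := by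
    rw [innerM, key]
    field_simp
  have hmN : |m| ≤ N := by
    have : (M : ℝ) * |m| ≤ Su := by
      rw [hm_def, meanM, abs_mul, abs_of_pos (by positivity : (0:ℝ) < 1 / (M:ℝ))]
      rw [show (M : ℝ) * (1 / (M : ℝ) * |∑ j : ZMod M, u j|) = |∑ j : ZMod M, u j| by
        field_simp]
      exact Finset.abs_sum_le_sum_abs _ _
    rw [← hNval] at this
    exact le_of_mul_le_mul_left this hM0
  -- finish
  have hfin : m ^ 2 + innerM M (fun j => u j - m) w ≤ (3 * N) ^ 2 := by
    rw [hS]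
    have hm2 : m ^ 2 ≤ N ^ 2 := by
      rw [← sq_abs m]
      exact pow_le_pow_left₀ (abs_nonneg _) hmN 2
    nlinarith
  calc Real.sqrt (m ^ 2 + innerM M (fun j => u j - m) w)
      ≤ Real.sqrt ((3 * N) ^ 2) := Real.sqrt_le_sqrt hfin
    _ = 3 * N := Real.sqrt_sq (by positivity)
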